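/- Let d ≥ 1, n ≥ 1, D ⊆ ℝ^d, r > 0, 0 < s, and ξ ≥ 0. Let D_r := ∪_{y∈D}{z ∈ ℂ^d : |z−y| < r} and 𝕋ⁿ_s := {x ∈ ℂⁿ : |Im xⱼ| < s for all j}. Let g : D_r × 𝕋ⁿ_s → ℂ be holomorphic, 2π-periodic in each of the last n variables, real-valued on D × ℝⁿ, and satisfy |Im g| ≤ ξ on D_r × 𝕋ⁿ_s. Then for every 0 < ζ ≤ 1/2, sup over D_{ζr} × 𝕋ⁿ_{ζs} of |Im g| is at most 8ζξ. -/

import Mathlib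

open scoped Real

/-- The complex `r`-neighborhood (with respect to the Euclidean norm) of a real set
`D ⊆ ℝ^d`, viewed inside `ℂ^d`. -/
def complexNbhd {d : ℕ} (D : Set (Fin d → ℝ)) (r : ℝ) : Set (Fin d → ℂ) :=
  {z | ∃ y ∈ D, Real.sqrt (∑ i, ‖z i - (y i : ℂ)‖ ^ 2) < r}

/-- The complex strip `𝕋ⁿ_s = {x ∈ ℂⁿ : |Im xⱼ| < s ∀ j}`. -/
def complexStrip (n : ℕ) (s : ℝ) : Set (Fin n → ℂ) :=
  {x | ∀ j, |(x j).im| < s}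

section Aux
open Complex Metric Set

lemma normSq_sinh_eq (z : ℂ) : Complex.normSq (Complex.sinh z) =
    (Real.sinh z.re * Real.cos z.im) ^ 2 + (Real.cosh z.re * Real.sin z.im) ^ 2 := by
  have h : Complex.sinh z = ((Real.sinh z.re * Real.cos z.im : ℝ) : ℂ)
      + ((Real.cosh z.re * Real.sin z.im : ℝ) : ℂ) * Complex.I := by
    conv_lhs => rw [← Complex.re_add_im z]
    rw [Complex.sinh_add, Complex.cosh_mul_I, Complex.sinh_mul_I]
    push_cast
    ring
  rw [h, Complex.normSq_add_mul_I]

lemma normSq_cosh_eq (z : ℂ) : Complex.normSq (Complex.cosh z) =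
    (Real.cosh z.re * Real.cos z.im) ^ 2 + (Real.sinh z.re * Real.sin z.im) ^ 2 := by
  have h : Complex.cosh z = ((Real.cosh z.re * Real.cos z.im : ℝ) : ℂ)
      + ((Real.sinh z.re * Real.sin z.im : ℝ) : ℂ) * Complex.I := by
    conv_lhs => rw [← Complex.re_add_im z]
    rw [Complex.cosh_add, Complex.cosh_mul_I, Complex.sinh_mul_I]
    push_cast
    ring
  rw [h, Complex.normSq_add_mul_I]

-- strip facts
lemma strip_cos_sq {b : ℝ} (hb : |b| < π/4) : Real.sin b ^ 2 < Real.cos b ^ 2 := by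
  have h2 : Real.cos b ^ 2 - Real.sin b ^ 2 = Real.cos (2*b) := (Real.cos_two_mul' b).symm
  have : 0 < Real.cos (2*b) := by
    apply Real.cos_pos_of_mem_Ioo
    constructor
    · have := abs_lt.1 hb; linarith
    · have := abs_lt.1 hb; linarith
  linarith

lemma cosh_vt_ne {z : ℂ} (hb : |z.im| < π/4) : Complex.cosh z ≠ 0 := by
  intro h
  have h1 := normSq_cosh_eq z
  rw [h, Complex.normSq_zero] at h1
  have hc : 0 < Real.cos z.im := by
    apply Real.cos_pos_of_mem_Ioo
    have := abs_lt.1 hb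
    have : -(π/2) < z.im ∧ z.im < π/2 := by
      constructor <;> [linarith [(abs_lt.1 hb).1, Real.pi_pos]; linarith [(abs_lt.1 hb).2, Real.pi_pos]]
    exact ⟨this.1, this.2⟩
  have hC : 0 < Real.cosh z.re := Real.cosh_pos _
  have hp := mul_pos hC hc
  nlinarith [sq_nonneg (Real.sinh z.re * Real.sin z.im), mul_pos hp hp]


set_option maxHeartbeats 1600000 in
lemma lemA_strict {R ξ : ℝ} {φ : ℂ → ℂ} (hR : 2 ≤ R) (hξ : 0 < ξ)
    (hφ : DifferentiableOn ℂ φ (ball (0:ℂ) R))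
    (h0 : (φ 0).im = 0)
    (hb : ∀ t ∈ ball (0:ℂ) R, |(φ t).im| < ξ) :
    |(φ 1).im| ≤ 8 * ξ / R := by
  have hRpos : (0:ℝ) < R := by linarith
  have hπ := Real.pi_pos
  set c : ℝ := π / (4 * ξ) with hc
  have hcpos : 0 < c := by positivity
  set v : ℂ → ℂ := fun t => (c : ℂ) * (φ t - φ 0) with hv
  have hvim : ∀ t, (v t).im = c * (φ t).im := by
    intro t
    simp [hv, Complex.mul_im, Complex.sub_im, h0]
  have hstrip : ∀ t ∈ ball (0:ℂ) R, |(v t).im| < π / 4 := by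
    intro t ht
    rw [hvim, abs_mul, abs_of_pos hcpos]
    have hb' := hb t ht
    calc c * |(φ t).im| < c * ξ := (mul_lt_mul_iff_right₀ hcpos).2 hb'
      _ = π / 4 := by rw [hc]; field_simp
  set h : ℂ → ℂ := fun t => Complex.sinh (v t) / Complex.cosh (v t) with hh
  have hvdiff : DifferentiableOn ℂ v (ball (0:ℂ) R) := by
    apply DifferentiableOn.const_mul
    exact hφ.sub_const _
  have hhdiff : DifferentiableOn ℂ h (ball (0:ℂ) R) := by
    apply DifferentiableOn.div
    · exact Complex.differentiable_sinh.comp_differentiableOn hvdiff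
    · exact Complex.differentiable_cosh.comp_differentiableOn hvdiff
    · intro t ht; exact cosh_vt_ne (hstrip t ht)
  have hlt : ∀ t ∈ ball (0:ℂ) R, ‖h t‖ < 1 := by
    intro t ht
    have hne := cosh_vt_ne (hstrip t ht)
    rw [hh]
    simp only [norm_div]
    rw [div_lt_one (norm_pos_iff.2 hne)]
    have h2 : Complex.normSq (Complex.sinh (v t)) < Complex.normSq (Complex.cosh (v t)) := by
      rw [normSq_sinh_eq, normSq_cosh_eq]
      have hs2 := strip_cos_sq (hstrip t ht)
      have h1 := Real.cosh_sq_sub_sinh_sq (v t).re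
      nlinarith [Real.cosh_pos (v t).re, sq_nonneg (Real.sinh (v t).re)]
    rw [← Complex.sq_norm, ← Complex.sq_norm] at h2
    nlinarith [norm_nonneg (Complex.sinh (v t)), norm_nonneg (Complex.cosh (v t))]
  have h00 : h 0 = 0 := by
    have hv0 : v 0 = 0 := by simp [hv]
    simp [hh, hv0]
  have hmaps : Set.MapsTo h (ball (0:ℂ) R) (ball (h 0) 1) := by
    intro t ht
    rw [h00, mem_ball, dist_zero_right]
    exact hlt t ht
  have h1mem : (1:ℂ) ∈ ball (0:ℂ) R := by
    rw [mem_ball, dist_zero_right]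
    simpa using by linarith
  have hsch := Complex.dist_le_div_mul_dist_of_mapsTo_ball hhdiff (hmaps.mono_right ball_subset_closedBall) h1mem
  rw [h00, dist_zero_right, dist_zero_right] at hsch
  simp only [norm_one, mul_one] at hsch
  -- now extract
  set z := v 1 with hz
  have hzim : |z.im| < π/4 := hstrip 1 h1mem
  have hne := cosh_vt_ne hzim
  have habs : ‖Complex.sinh z‖ ≤ (1/R) * ‖Complex.cosh z‖ := by
    have he : ‖h 1‖ = ‖Complex.sinh z‖ / ‖Complex.cosh z‖ := by
      rw [hh]; simp [norm_div, hz]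
    rw [he, div_le_iff₀ (norm_pos_iff.2 hne)] at hsch
    linarith [hsch]
  have hNS : Complex.normSq (Complex.sinh z) ≤ (1/R)^2 * Complex.normSq (Complex.cosh z) := by
    rw [← Complex.sq_norm, ← Complex.sq_norm]
    nlinarith [norm_nonneg (Complex.sinh z), norm_nonneg (Complex.cosh z), habs,
      mul_nonneg (norm_nonneg (Complex.cosh z)) (norm_nonneg (Complex.cosh z))]
  rw [normSq_sinh_eq, normSq_cosh_eq] at hNS
  set a := z.re with ha
  set b := z.im with hbdef
  have hC2 : Real.cosh a ^ 2 = Real.sinh a ^ 2 + 1 := Real.cosh_sq a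
  have hsc : Real.sin b ^ 2 + Real.cos b ^ 2 = 1 := Real.sin_sq_add_cos_sq b
  have e1 : (Real.sinh a * Real.cos b)^2 + (Real.cosh a * Real.sin b)^2
      = Real.sinh a ^ 2 + Real.sin b ^ 2 := by
    linear_combination Real.sinh a ^ 2 * hsc + Real.sin b ^ 2 * hC2
  have e2 : (Real.cosh a * Real.cos b)^2 + (Real.sinh a * Real.sin b)^2
      = Real.sinh a ^ 2 + 1 - Real.sin b ^ 2 := by
    linear_combination Real.cos b ^ 2 * hC2 + Real.sinh a ^ 2 * hsc + hsc
  rw [e1, e2] at hNS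
  have hρsq : (1/R)^2 ≤ 1/4 := by
    rw [div_pow, one_pow, div_le_div_iff₀ (by positivity) (by norm_num)]
    nlinarith
  have hρnn : (0:ℝ) ≤ (1/R)^2 := sq_nonneg _
  have hsb1 : Real.sin b ^ 2 ≤ 1 := by nlinarith [sq_nonneg (Real.cos b)]
  have hsinh : Real.sinh a ^ 2 ≤ 1/3 := by
    nlinarith [mul_le_mul_of_nonneg_right hρsq
        (by nlinarith [sq_nonneg (Real.sinh a)] : (0:ℝ) ≤ Real.sinh a ^ 2 + 1 - Real.sin b ^ 2),
      mul_nonneg hρnn (sq_nonneg (Real.sin b)), sq_nonneg (Real.sin b)]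
  have hsinb : Real.sin b ^ 2 ≤ (4/3) * (1/R)^2 := by
    nlinarith [mul_le_mul_of_nonneg_left hsinh hρnn,
      mul_nonneg hρnn (sq_nonneg (Real.sin b)), sq_nonneg (Real.sinh a)]
  -- Jordan inequality: b² ≤ (π/2)² sin²b
  have hbsq : b ^ 2 ≤ (π/2)^2 * Real.sin b ^ 2 := by
    have hj : 2/π * |b| ≤ Real.sin |b| :=
      Real.mul_le_sin (abs_nonneg b) (by nlinarith [hzim, Real.pi_pos])
    have hj' : 2 * |b| ≤ π * Real.sin |b| := by
      rw [div_mul_eq_mul_div, div_le_iff₀ hπ] at hj; linarith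
    have hsb : Real.sin |b| ^ 2 = Real.sin b ^ 2 := by
      rcases abs_cases b with ⟨h1, _⟩ | ⟨h1, _⟩ <;> rw [h1] <;> simp [Real.sin_neg]
    have hsq := mul_self_le_mul_self (by positivity) hj'
    nlinarith [_root_.sq_abs b, hsb, hsq, Real.pi_pos]
  have him : (φ 1).im = b / c := by
    rw [eq_div_iff (ne_of_gt hcpos)]
    have := hvim 1
    rw [← hz] at this
    rw [hbdef, this]; ring
  rw [him, abs_div, abs_of_pos hcpos, div_le_iff₀ hcpos]
  have hgoal : |b| ≤ π * (1/R) := by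
    have h3 : b^2 ≤ (π/2)^2 * ((4/3) * (1/R)^2) := by
      nlinarith [sq_nonneg (π/2), hbsq, hsinb,
        mul_le_mul_of_nonneg_left hsinb (sq_nonneg (π/2))]
    have h4 : (π/2)^2 * ((4/3)*(1/R)^2) ≤ (π * (1/R))^2 := by
      rw [mul_pow]; nlinarith [sq_nonneg (π * (1/R)), sq_nonneg π, sq_nonneg (1/R), mul_nonneg (sq_nonneg π) (sq_nonneg (1/R))]
    have hpos : 0 ≤ π * (1/R) := by positivity
    nlinarith [_root_.sq_abs b, abs_nonneg b]
  have hfin : π * (1/R) ≤ 8 * ξ / R * c := by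
    rw [hc]
    have hq : 8 * ξ / R * (π / (4*ξ)) = 2 * π / R := by field_simp; ring
    rw [hq]
    rw [mul_one_div, div_le_div_iff₀ hRpos hRpos]
    nlinarith
  linarith

lemma lemA {R ξ : ℝ} {φ : ℂ → ℂ} (hR : 2 ≤ R) (hξ : 0 ≤ ξ)
    (hφ : DifferentiableOn ℂ φ (ball (0:ℂ) R))
    (h0 : (φ 0).im = 0)
    (hb : ∀ t ∈ ball (0:ℂ) R, |(φ t).im| ≤ ξ) :
    |(φ 1).im| ≤ 8 * ξ / R := by
  have hRpos : (0:ℝ) < R := by linarith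
  apply le_of_forall_pos_le_add
  intro ε hε
  have hη : 0 < ε * R / 8 := by positivity
  have key := lemA_strict hR (by linarith : (0:ℝ) < ξ + ε * R / 8) hφ h0
    (fun t ht => lt_of_le_of_lt (hb t ht) (by linarith))
  calc |(φ 1).im| ≤ 8 * (ξ + ε * R / 8) / R := key
    _ = 8 * ξ / R + ε := by field_simp

end Aux

set_option maxHeartbeats 1600000 in
open Complex Metric Set in
/-- Let `g : D_r × 𝕋ⁿ_s → ℂ` be holomorphic, `2π`-periodic in each of the
last `n` variables, real-valued on `D × ℝⁿ`, with `|Im g| ≤ ξ` on `D_r × 𝕋ⁿ_s`. Then for every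
`0 < ζ ≤ 1/2`, `|Im g| ≤ 8 ζ ξ` on `D_{ζ r} × 𝕋ⁿ_{ζ s}`. -/
theorem im_bound_shrink {d n : ℕ} (hd : 1 ≤ d) (hn : 1 ≤ n)
    (D : Set (Fin d → ℝ)) (r s ξ : ℝ) (hr : 0 < r) (hs : 0 < s) (hξ : 0 ≤ ξ)
    (g : (Fin d → ℂ) × (Fin n → ℂ) → ℂ)
    (hol : DifferentiableOn ℂ g (complexNbhd D r ×ˢ complexStrip n s))
    (hper : ∀ z x, ∀ m : Fin n → ℤ, g (z, x + fun j => (2 * π * (m j : ℝ) : ℂ)) = g (z, x))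
    (hreal : ∀ y ∈ D, ∀ x : Fin n → ℝ,
      (g ((fun i => (y i : ℂ)), (fun j => (x j : ℂ)))).im = 0)
    (hbound : ∀ w ∈ complexNbhd D r ×ˢ complexStrip n s, |(g w).im| ≤ ξ) :
    ∀ ζ : ℝ, 0 < ζ → ζ ≤ 1 / 2 →
      ∀ w ∈ complexNbhd D (ζ * r) ×ˢ complexStrip n (ζ * s), |(g w).im| ≤ 8 * ζ * ξ := by
  rintro ζ hζ hζ2 ⟨z, x⟩ ⟨⟨y, hyD, hy⟩, hx⟩
  set p : ℂ → (Fin d → ℂ) × (Fin n → ℂ) := fun t =>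
    (fun i => (y i : ℂ) + t * (z i - y i),
     fun j => (((x j).re : ℝ) : ℂ) + t * ((((x j).im : ℝ) : ℂ) * Complex.I)) with hp
  have hmaps : Set.MapsTo p (ball (0:ℂ) (1/ζ)) (complexNbhd D r ×ˢ complexStrip n s) := by
    intro t ht
    have htabs : ‖t‖ < 1/ζ := by
      rw [mem_ball, dist_zero_right] at ht
      exact ht
    have htζ : ‖t‖ * ζ < 1 := by
      rw [← lt_div_iff₀ hζ]
      exact htabs
    constructor
    · refine ⟨y, hyD, ?_⟩
      have he : ∀ i, ‖(p t).1 i - (y i : ℂ)‖ ^ 2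
          = ‖t‖ ^ 2 * ‖z i - (y i : ℂ)‖ ^ 2 := by
        intro i
        rw [hp]
        simp only [add_sub_cancel_left, norm_mul]
        ring
      rw [Finset.sum_congr rfl (fun i _ => he i), ← Finset.mul_sum,
        Real.sqrt_mul (sq_nonneg _), Real.sqrt_sq (norm_nonneg t)]
      have hA := hy
      have hAnn : 0 ≤ Real.sqrt (∑ i, ‖z i - (y i : ℂ)‖ ^ 2) := Real.sqrt_nonneg _
      nlinarith [norm_nonneg t, mul_pos hζ hr]
    · intro j
      have him : ((p t).2 j).im = t.re * (x j).im := by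
        rw [hp]
        simp [Complex.add_im, Complex.mul_im, Complex.mul_re, Complex.I_re, Complex.I_im]
      rw [him, abs_mul]
      have h1 : |t.re| ≤ ‖t‖ := Complex.abs_re_le_norm t
      have h2 := hx j
      nlinarith [abs_nonneg t.re, abs_nonneg (x j).im, mul_pos hζ hs, norm_nonneg t]
  have hp' : Differentiable ℂ p := by
    apply Differentiable.prodMk
    · rw [differentiable_pi]
      intro i
      exact (differentiable_const _).add (differentiable_id.mul_const _)
    · rw [differentiable_pi]
      intro j
      exact (differentiable_const _).add (differentiable_id.mul_const _)
  have hφ : DifferentiableOn ℂ (g ∘ p) (ball (0:ℂ) (1/ζ)) :=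
    hol.comp hp'.differentiableOn hmaps
  have h0 : ((g ∘ p) 0).im = 0 := by
    have hp0 : p 0 = ((fun i => ((y i : ℝ) : ℂ)), fun j => (((x j).re : ℝ) : ℂ)) := by
      rw [hp]
      simp
    show (g (p 0)).im = 0
    rw [hp0]
    exact hreal y hyD (fun j => (x j).re)
  have hb : ∀ t ∈ ball (0:ℂ) (1/ζ), |((g ∘ p) t).im| ≤ ξ := fun t ht =>
    hbound (p t) (hmaps ht)
  have hR : 2 ≤ 1/ζ := by
    rw [le_div_iff₀ hζ]
    linarith
  have key := lemA hR hξ hφ h0 hb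
  have hp1 : p 1 = (z, x) := by
    rw [hp]
    refine Prod.ext ?_ ?_
    · funext i
      simp
    · funext j
      simp [Complex.re_add_im]
  have hgp1 : (g ∘ p) 1 = g (z, x) := by rw [Function.comp_apply, hp1]
  rw [hgp1] at key
  have heq : 8 * ξ / (1/ζ) = 8 * ζ * ξ := by
    field_simp
  rw [heq] at key
  exact key
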